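/- arXiv:0708.4081 — 2 statements merged into one kernel-verified Lean document; each statement's English description precedes it below -/
import Mathlib

section
/- For any 0 < λ < 1 and β ∈ (0,1], the sum ∑_{k=1}^{N} (1-λ)^k k^β is bounded by λ^{-1-β}. -/
/-- For any `0 < λ < 1` and `β ∈ (0,1]`, the sum `∑_{k=1}^N (1-λ)^k k^β`
is bounded by `λ^{-1-β}`. -/
theorem geom_sum_rpow_bound (N : ℕ) (lam β : ℝ)
    (hlam₀ : 0 < lam) (hlam₁ : lam < 1) (hβ₀ : 0 < β) (hβ₁ : β ≤ 1) :
    ∑ k ∈ Finset.Icc 1 N, (1 - lam) ^ k * (k : ℝ) ^ β ≤ lam ^ (-(1 + β)) := by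
  have hr0 : (0:ℝ) < 1 - lam := by linarith
  have hr1 : 1 - lam < 1 := by linarith
  set r : ℝ := 1 - lam with hrdef
  set s := Finset.Icc 1 N with hs
  rcases Nat.eq_zero_or_pos N with hN | hN
  · subst hN
    rw [hs, Finset.Icc_eq_empty (by omega), Finset.sum_empty]
    positivity
  have hmem : (1 : ℕ) ∈ s := Finset.mem_Icc.mpr ⟨le_refl 1, hN⟩
  set W : ℝ := ∑ k ∈ s, r ^ k with hW
  set T : ℝ := ∑ k ∈ s, r ^ k * k with hT
  have hW0 : 0 < W := Finset.sum_pos (fun k _ => pow_pos hr0 k) ⟨1, hmem⟩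
  have hT0 : 0 ≤ T := Finset.sum_nonneg fun k _ => by positivity
  -- bounds on W and T via the infinite geometric series
  have hsumg : Summable fun n : ℕ => r ^ n := summable_geometric_of_lt_one hr0.le hr1
  have hWle : W ≤ lam⁻¹ := by
    have h1 : W ≤ ∑' n : ℕ, r ^ n :=
      Summable.sum_le_tsum s (fun k _ => by positivity) hsumg
    have h2 : (∑' n : ℕ, r ^ n) = lam⁻¹ := by
      rw [tsum_geometric_of_lt_one hr0.le hr1]; congr 1; rw [hrdef]; ring
    linarith
  have hsumT : Summable fun n : ℕ => (n : ℝ) * r ^ n :=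
    (hasSum_coe_mul_geometric_of_norm_lt_one
      (by rw [Real.norm_eq_abs, abs_of_pos hr0]; exact hr1)).summable
  have hTle : T ≤ lam⁻¹ ^ 2 := by
    have h1 : T ≤ ∑' n : ℕ, (n : ℝ) * r ^ n := by
      have := Summable.sum_le_tsum (f := fun n : ℕ => (n:ℝ) * r ^ n) s (fun k _ => by positivity) hsumT
      calc T = ∑ k ∈ s, (k : ℝ) * r ^ k := by
              apply Finset.sum_congr rfl; intro k _; ring
        _ ≤ _ := this
    have h2 : (∑' n : ℕ, (n : ℝ) * r ^ n) = r / lam ^ 2 := by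
      rw [tsum_coe_mul_geometric_of_norm_lt_one
        (by rw [Real.norm_eq_abs, abs_of_pos hr0]; exact hr1)]
      congr 1
      rw [hrdef]; ring
    have h3 : r / lam ^ 2 ≤ lam⁻¹ ^ 2 := by
      rw [div_le_iff₀ (by positivity)]
      have : lam⁻¹ ^ 2 * lam ^ 2 = 1 := by
        field_simp
      rw [this]; linarith
    linarith
  -- Jensen step
  have hβinv : 1 ≤ 1 / β := by rw [le_div_iff₀ hβ₀]; linarith
  have jensen : ∑ k ∈ s, (r ^ k / W) * (k : ℝ) ^ β ≤ (∑ k ∈ s, (r ^ k / W) * k) ^ β := by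
    have h := Real.arith_mean_le_rpow_mean s (fun k => r ^ k / W) (fun k => (k : ℝ) ^ β)
      (fun k _ => by positivity)
      (by rw [← Finset.sum_div, ← hW, div_self hW0.ne'])
      (fun k _ => by positivity) hβinv
    have hz : ∀ k ∈ s, ((k : ℝ) ^ β) ^ (1 / β) = (k : ℝ) := by
      intro k _
      rw [← Real.rpow_mul (Nat.cast_nonneg k), mul_one_div, div_self hβ₀.ne', Real.rpow_one]
    calc ∑ k ∈ s, (r ^ k / W) * (k : ℝ) ^ β
        ≤ (∑ k ∈ s, (r ^ k / W) * ((k : ℝ) ^ β) ^ (1/β)) ^ (1 / (1/β)) := h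
      _ = (∑ k ∈ s, (r ^ k / W) * k) ^ β := by
          rw [one_div_one_div]
          congr 1
          exact Finset.sum_congr rfl fun k hk => by rw [hz k hk]
  -- assemble
  have key : ∑ k ∈ s, r ^ k * (k : ℝ) ^ β ≤ W ^ (1 - β) * T ^ β := by
    have e1 : ∑ k ∈ s, r ^ k * (k : ℝ) ^ β = W * ∑ k ∈ s, (r ^ k / W) * (k : ℝ) ^ β := by
      rw [Finset.mul_sum]
      apply Finset.sum_congr rfl; intro k _; field_simp
    have e2 : ∑ k ∈ s, (r ^ k / W) * (k : ℝ) = T / W := by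
      rw [hT, Finset.sum_div]
      exact Finset.sum_congr rfl fun k _ => by ring
    rw [e1]
    have h2 : W * (∑ k ∈ s, (r ^ k / W) * (k : ℝ)) ^ β = W ^ (1 - β) * T ^ β := by
      rw [e2, Real.div_rpow hT0 hW0.le, Real.rpow_sub hW0, Real.rpow_one]
      field_simp
    calc W * ∑ k ∈ s, (r ^ k / W) * (k : ℝ) ^ β
        ≤ W * (∑ k ∈ s, (r ^ k / W) * (k : ℝ)) ^ β :=
          mul_le_mul_of_nonneg_left jensen hW0.le
      _ = W ^ (1 - β) * T ^ β := h2
  have hfin : W ^ (1 - β) * T ^ β ≤ lam ^ (-(1 + β)) := by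
    have hμ : (0:ℝ) < lam⁻¹ := by positivity
    have b1 : W ^ (1 - β) ≤ (lam⁻¹) ^ (1 - β) :=
      Real.rpow_le_rpow hW0.le hWle (by linarith)
    have b2 : T ^ β ≤ ((lam⁻¹) ^ 2) ^ β :=
      Real.rpow_le_rpow hT0 hTle hβ₀.le
    have hmul : W ^ (1 - β) * T ^ β ≤ (lam⁻¹) ^ (1 - β) * ((lam⁻¹) ^ 2) ^ β := by
      apply mul_le_mul b1 b2 (Real.rpow_nonneg hT0 β) (Real.rpow_nonneg hμ.le _)
    have heq : (lam⁻¹) ^ (1 - β) * ((lam⁻¹:ℝ) ^ 2) ^ β = lam ^ (-(1 + β)) := by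
      rw [← Real.rpow_natCast (lam⁻¹) 2, ← Real.rpow_mul hμ.le,
        ← Real.rpow_add hμ, Real.inv_rpow hlam₀.le, ← Real.rpow_neg hlam₀.le]
      norm_num
      ring_nf
    linarith [heq ▸ hmul]
  linarith
end

section
/- Suppose a: [0,1] → ℝ^{p+1} satisfies |a(u) − a(v)| ≤ C|u − v|^β for β ∈ (0,1], and F is a symmetric positive definite matrix with ‖(I−λF)^k‖ ≤ K(1−λδ)^k, 0 < λδ < 1. Then |∑_{k=1}^{t−1} λ (I − λF)^k F (a((t−k)/N) − a(t/N))| = O(1/(λN)^β), uniformly in t ≤ N. -/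
open MeasureTheory

noncomputable def opNorm {n : ℕ} (A : Matrix (Fin n) (Fin n) ℝ) : ℝ :=
  ‖Matrix.toEuclideanCLM (𝕜 := ℝ) A‖

noncomputable def enorm' {n : ℕ} (v : Fin n → ℝ) : ℝ :=
  Real.sqrt (∑ i, v i ^ 2)

lemma enorm'_eq {n : ℕ} (v : Fin n → ℝ) :
    enorm' v = ‖(WithLp.equiv 2 (Fin n → ℝ)).symm v‖ := by
  rw [EuclideanSpace.norm_eq]
  simp [enorm', Real.norm_eq_abs, sq_abs]

lemma enorm'_mulVec_le {n : ℕ} (A : Matrix (Fin n) (Fin n) ℝ) (v : Fin n → ℝ) :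
    enorm' (A.mulVec v) ≤ opNorm A * enorm' v := by
  rw [enorm'_eq, enorm'_eq, WithLp.equiv_symm_apply, ← Matrix.toEuclideanCLM_toLp]
  exact (Matrix.toEuclideanCLM (𝕜 := ℝ) A).le_opNorm _

lemma opNorm_mul_le {n : ℕ} (A B : Matrix (Fin n) (Fin n) ℝ) :
    opNorm (A * B) ≤ opNorm A * opNorm B := by
  unfold opNorm
  rw [map_mul]
  exact norm_mul_le _ _

lemma rpow_le_one_add {β x : ℝ} (hβ₀ : 0 < β) (hβ₁ : β ≤ 1) (hx : 0 ≤ x) :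
    x ^ β ≤ 1 + x := by
  rcases le_or_gt x 1 with h | h
  · calc x ^ β ≤ 1 := Real.rpow_le_one hx h hβ₀.le
    _ ≤ 1 + x := by linarith
  · calc x ^ β ≤ x ^ (1 : ℝ) := Real.rpow_le_rpow_of_exponent_le h.le hβ₁
    _ = x := Real.rpow_one x
    _ ≤ 1 + x := by linarith

lemma geom_sum_aux {q : ℝ} (hq0 : 0 < q) (hq1 : q < 1) (s : Finset ℕ) :
    ∑ k ∈ s, (1 - q) ^ k * (1 + q * k) ≤ 2 / q := by
  have hr0 : (0 : ℝ) ≤ 1 - q := by linarith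
  have hr1 : 1 - q < 1 := by linarith
  have hrn : ‖(1 - q : ℝ)‖ < 1 := by rw [Real.norm_eq_abs, abs_of_nonneg hr0]; exact hr1
  have hsum1 : Summable fun k : ℕ => (1 - q) ^ k := summable_geometric_of_lt_one hr0 hr1
  have hsum2 : Summable fun k : ℕ => (k : ℝ) * (1 - q) ^ k := by
    simpa using summable_pow_mul_geometric_of_norm_lt_one (R := ℝ) 1 hrn
  have hsum : Summable fun k : ℕ => (1 - q) ^ k * (1 + q * k) := by
    have : (fun k : ℕ => (1 - q) ^ k * (1 + q * k))
        = fun k : ℕ => (1 - q) ^ k + q * ((k : ℝ) * (1 - q) ^ k) := by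
      funext k; ring
    rw [this]
    exact hsum1.add ((hsum2.mul_left q))
  have hnonneg : ∀ k : ℕ, 0 ≤ (1 - q) ^ k * (1 + q * k) := by
    intro k
    have : (0 : ℝ) ≤ 1 + q * k := by positivity
    positivity
  calc ∑ k ∈ s, (1 - q) ^ k * (1 + q * k)
      ≤ ∑' k : ℕ, (1 - q) ^ k * (1 + q * k) :=
        Summable.sum_le_tsum s (fun k _ => hnonneg k) hsum
    _ = ∑' k : ℕ, ((1 - q) ^ k + q * ((k : ℝ) * (1 - q) ^ k)) := by
        congr 1; funext k; ring
    _ = (∑' k : ℕ, (1 - q) ^ k) + q * ∑' k : ℕ, (k : ℝ) * (1 - q) ^ k := by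
        rw [Summable.tsum_add hsum1 (hsum2.mul_left q), tsum_mul_left]
    _ = (1 - (1 - q))⁻¹ + q * ((1 - q) / (1 - (1 - q)) ^ 2) := by
        rw [tsum_geometric_of_lt_one hr0 hr1, tsum_coe_mul_geometric_of_norm_lt_one hrn]
    _ = q⁻¹ + (1 - q) / q := by
        rw [show (1 : ℝ) - (1 - q) = q by ring]
        field_simp
    _ ≤ 2 / q := by
        rw [inv_eq_one_div, ← add_div]
        gcongr
        linarith

lemma enorm'_smul {n : ℕ} (c : ℝ) (v : Fin n → ℝ) :
    enorm' (c • v) = |c| * enorm' v := by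
  rw [enorm'_eq, enorm'_eq, WithLp.equiv_symm_apply, WithLp.toLp_smul, norm_smul, Real.norm_eq_abs]

lemma enorm'_sum_le {n : ℕ} (s : Finset ℕ) (f : ℕ → Fin n → ℝ) :
    enorm' (∑ k ∈ s, f k) ≤ ∑ k ∈ s, enorm' (f k) := by
  simp only [enorm'_eq]
  have h : (WithLp.equiv 2 (Fin n → ℝ)).symm (∑ k ∈ s, f k)
      = ∑ k ∈ s, (WithLp.equiv 2 (Fin n → ℝ)).symm (f k) := by
    simp only [WithLp.equiv_symm_apply]
    exact WithLp.toLp_sum (p := 2) (s := s) (f := f)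
  rw [h]
  exact norm_sum_le _ _

lemma enorm'_nonneg' {n : ℕ} (v : Fin n → ℝ) : 0 ≤ enorm' v := Real.sqrt_nonneg _

/-- Deterministic bias bound: if `a` is `β`-Hölder and `‖(I−λF)^k‖ ≤ Kn (1−λδ)^k`, then
`|∑_{k=1}^{t−1} λ (I − λF)^k F (a((t−k)/N) − a(t/N))| = O(1/(λN)^β)` uniformly in
`t ≤ N`. -/
theorem deterministic_bias_bound {p : ℕ}
    (a : ℝ → Fin (p + 1) → ℝ) (C β : ℝ) (hC : 0 < C) (hβ₀ : 0 < β) (hβ₁ : β ≤ 1)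
    (hHolder : ∀ u v : ℝ, enorm' (a u - a v) ≤ C * |u - v| ^ β)
    (F : Matrix (Fin (p + 1)) (Fin (p + 1)) ℝ) (hsymm : F.IsSymm) (hpos : F.PosDef)
    (Kn δ : ℝ) (hKn : 0 < Kn) (hδ : 0 < δ) :
    ∃ K > (0 : ℝ), ∀ lam : ℝ, 0 < lam → lam * δ < 1 →
      (∀ k : ℕ, opNorm (((1 : Matrix (Fin (p + 1)) (Fin (p + 1)) ℝ) - lam • F) ^ k)
          ≤ Kn * (1 - lam * δ) ^ k) →
      ∀ N t : ℕ, 1 ≤ t → t ≤ N →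
        enorm' (∑ k ∈ Finset.Icc 1 (t - 1),
            lam • ((((1 : Matrix (Fin (p + 1)) (Fin (p + 1)) ℝ) - lam • F) ^ k) * F).mulVec
              (a (((t : ℝ) - (k : ℝ)) / (N : ℝ)) - a ((t : ℝ) / (N : ℝ))))
          ≤ K / ((lam * (N : ℝ)) ^ β) := by
  have hF0 : (0:ℝ) ≤ opNorm F := norm_nonneg _
  set nF : ℝ := opNorm F + 1 with hnF
  have hnF0 : 0 < nF := by rw [hnF]; linarith
  refine ⟨2 * Kn * nF * C / δ ^ (β + 1),
    div_pos (mul_pos (mul_pos (mul_pos two_pos hKn) hnF0) hC) (Real.rpow_pos_of_pos hδ _), ?_⟩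
  intro lam hlam hlamδ hop N t ht htN
  have hN1 : 1 ≤ N := le_trans ht htN
  have hN : (0:ℝ) < (N:ℝ) := by exact_mod_cast Nat.lt_of_lt_of_le Nat.zero_lt_one hN1
  set q := lam * δ with hqdef
  have hq0 : 0 < q := mul_pos hlam hδ
  have hq1 : q < 1 := hlamδ
  have h1q : (0:ℝ) ≤ 1 - q := by linarith
  have hqβ : (0:ℝ) < q ^ β := Real.rpow_pos_of_pos hq0 β
  have hNβ : (0:ℝ) < (N:ℝ) ^ β := Real.rpow_pos_of_pos hN β
  have hlamβ : (0:ℝ) < lam ^ β := Real.rpow_pos_of_pos hlam β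
  have hδβ : (0:ℝ) < δ ^ β := Real.rpow_pos_of_pos hδ β
  set P : Matrix (Fin (p + 1)) (Fin (p + 1)) ℝ :=
    (1 : Matrix (Fin (p + 1)) (Fin (p + 1)) ℝ) - lam • F with hP
  have hterm : ∀ k ∈ Finset.Icc 1 (t - 1),
      enorm' (lam • ((P ^ k * F).mulVec
          (a (((t : ℝ) - (k : ℝ)) / (N : ℝ)) - a ((t : ℝ) / (N : ℝ)))))
        ≤ (lam * Kn * nF * C / ((N:ℝ) ^ β * q ^ β)) * ((1 - q) ^ k * (1 + q * k)) := by
    intro k _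
    have hw : enorm' (a (((t : ℝ) - (k : ℝ)) / (N : ℝ)) - a ((t : ℝ) / (N : ℝ)))
        ≤ C * ((k : ℝ) / (N : ℝ)) ^ β := by
      have habs : |(((t : ℝ) - (k : ℝ)) / (N : ℝ)) - ((t : ℝ) / (N : ℝ))| = (k : ℝ) / (N : ℝ) := by
        rw [show (((t : ℝ) - (k : ℝ)) / (N : ℝ)) - ((t : ℝ) / (N : ℝ)) = -((k : ℝ) / (N : ℝ)) by
          ring, abs_neg, abs_of_nonneg (by positivity)]
      calc enorm' _ ≤ C * |(((t : ℝ) - (k : ℝ)) / (N : ℝ)) - ((t : ℝ) / (N : ℝ))| ^ β :=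
            hHolder _ _
        _ = C * ((k : ℝ) / (N : ℝ)) ^ β := by rw [habs]
    have hM : opNorm (P ^ k * F) ≤ Kn * (1 - q) ^ k * nF :=
      calc opNorm (P ^ k * F) ≤ opNorm (P ^ k) * opNorm F := opNorm_mul_le _ _
        _ ≤ (Kn * (1 - q) ^ k) * nF := by
            apply mul_le_mul (hop k) (by rw [hnF]; linarith) hF0
            exact mul_nonneg hKn.le (pow_nonneg h1q k)
    have hx : ((k : ℝ) / (N : ℝ)) ^ β ≤ (1 + q * k) / (q ^ β * (N:ℝ) ^ β) := by
      have hk1 : (k : ℝ) ^ β ≤ (1 + q * k) / q ^ β := by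
        rw [le_div_iff₀ hqβ]
        calc (k : ℝ) ^ β * q ^ β = (q * (k : ℝ)) ^ β := by
              rw [Real.mul_rpow hq0.le (Nat.cast_nonneg k)]; ring
          _ ≤ 1 + q * k := rpow_le_one_add hβ₀ hβ₁ (by positivity)
      calc ((k : ℝ) / (N : ℝ)) ^ β = (k : ℝ) ^ β / (N:ℝ) ^ β :=
            Real.div_rpow (Nat.cast_nonneg k) hN.le β
        _ ≤ ((1 + q * k) / q ^ β) / (N:ℝ) ^ β := by gcongr
        _ = (1 + q * k) / (q ^ β * (N:ℝ) ^ β) := by rw [div_div]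
    have hwx : enorm' (a (((t : ℝ) - (k : ℝ)) / (N : ℝ)) - a ((t : ℝ) / (N : ℝ)))
        ≤ C * ((1 + q * k) / (q ^ β * (N:ℝ) ^ β)) :=
      hw.trans (mul_le_mul_of_nonneg_left hx hC.le)
    calc enorm' (lam • ((P ^ k * F).mulVec
            (a (((t : ℝ) - (k : ℝ)) / (N : ℝ)) - a ((t : ℝ) / (N : ℝ)))))
        = lam * enorm' ((P ^ k * F).mulVec
            (a (((t : ℝ) - (k : ℝ)) / (N : ℝ)) - a ((t : ℝ) / (N : ℝ)))) := by
          rw [enorm'_smul, abs_of_pos hlam]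
      _ ≤ lam * (opNorm (P ^ k * F) * enorm'
            (a (((t : ℝ) - (k : ℝ)) / (N : ℝ)) - a ((t : ℝ) / (N : ℝ)))) :=
          mul_le_mul_of_nonneg_left (enorm'_mulVec_le _ _) hlam.le
      _ ≤ lam * ((Kn * (1 - q) ^ k * nF) * (C * ((1 + q * k) / (q ^ β * (N:ℝ) ^ β)))) := by
          apply mul_le_mul_of_nonneg_left _ hlam.le
          apply mul_le_mul hM hwx (enorm'_nonneg' _)
          exact mul_nonneg (mul_nonneg hKn.le (pow_nonneg h1q k)) hnF0.le
      _ = (lam * Kn * nF * C / ((N:ℝ) ^ β * q ^ β)) * ((1 - q) ^ k * (1 + q * k)) := by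
          field_simp
  have hA : (0:ℝ) < lam * Kn * nF * C / ((N:ℝ) ^ β * q ^ β) :=
    div_pos (mul_pos (mul_pos (mul_pos hlam hKn) hnF0) hC) (mul_pos hNβ hqβ)
  calc enorm' (∑ k ∈ Finset.Icc 1 (t - 1),
        lam • ((P ^ k * F).mulVec
          (a (((t : ℝ) - (k : ℝ)) / (N : ℝ)) - a ((t : ℝ) / (N : ℝ)))))
      ≤ ∑ k ∈ Finset.Icc 1 (t - 1),
          enorm' (lam • ((P ^ k * F).mulVec
            (a (((t : ℝ) - (k : ℝ)) / (N : ℝ)) - a ((t : ℝ) / (N : ℝ))))) :=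
        enorm'_sum_le _ _
    _ ≤ ∑ k ∈ Finset.Icc 1 (t - 1),
          (lam * Kn * nF * C / ((N:ℝ) ^ β * q ^ β)) * ((1 - q) ^ k * (1 + q * k)) :=
        Finset.sum_le_sum hterm
    _ = (lam * Kn * nF * C / ((N:ℝ) ^ β * q ^ β)) *
          ∑ k ∈ Finset.Icc 1 (t - 1), (1 - q) ^ k * (1 + q * k) := by
        rw [Finset.mul_sum]
    _ ≤ (lam * Kn * nF * C / ((N:ℝ) ^ β * q ^ β)) * (2 / q) :=
        mul_le_mul_of_nonneg_left (geom_sum_aux hq0 hq1 _) hA.le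
    _ = 2 * Kn * nF * C / δ ^ (β + 1) / ((lam * (N:ℝ)) ^ β) := by
        rw [Real.mul_rpow hlam.le hN.le, Real.rpow_add hδ, Real.rpow_one, hqdef,
          Real.mul_rpow hlam.le hδ.le]
        field_simp
end
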